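/- Let d ∈ {1,2,3} and p = p(d) (p(1) = 3, p(2) = 2√2, p(3) = (1+√17)/2). Suppose u₁, u₂ : (1,∞) → ℝ are nonnegative, twice differentiable, both satisfy the radial equation w''(r) + ((d−1)/r)·w'(r) = w(r)² for all r > 1, u₂(r) ≤ u₁(r) and u₂(r) ≥ 2(4−d)/r² for all r > 1, and u₁(r) → 0 as r → ∞. Then for all R and r with 1 < R ≤ r, one has u₁(r) − u₂(r) ≤ (R/r)^p · (u₁(R) − u₂(R)). -/

import Mathlib

open Real Filter

open Set

lemma alg (dd p c A C q1 q2 v1 v2 : ℝ) (hc : c ≠ 0)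
    (hq : q1 - q2 = -(C * p * (A / c)))
    (hkey : p ^ 2 - (dd - 2) * p = 4 * (4 - dd)) :
    ((v1 ^ 2 - (dd - 1) / c * q1) - (v2 ^ 2 - (dd - 1) / c * q2)
        + C * p * ((-p - 1) * (A / c ^ 2))) * c ^ 2
      = (v1 ^ 2 - v2 ^ 2) * c ^ 2 - 4 * (4 - dd) * (C * A) := by
  have h2 : (q1 - q2) * c = -(C * p * A) := by
    field_simp at hq
    linarith [hq]
  have hcc : c⁻¹ * c = 1 := inv_mul_cancel₀ hc
  linear_combination (-(dd - 1) * (q1 - q2) * c + C * p * (-p - 1) * A * (c⁻¹ * c + 1)) * hcc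
    - (dd - 1) * h2 - (C * A) * hkey

lemma second_deriv_test {f : ℝ → ℝ} {x₀ m : ℝ}
    (hdiff : ∀ᶠ y in nhds x₀, DifferentiableAt ℝ f y)
    (hmax : IsLocalMax f x₀)
    (hder : HasDerivAt (deriv f) m x₀) (hm : 0 < m) : False := by
  have h0 : deriv f x₀ = 0 := hmax.deriv_eq_zero
  have hslope : Tendsto (slope (deriv f) x₀) (nhdsWithin x₀ {x₀}ᶜ) (nhds m) :=
    hasDerivAt_iff_tendsto_slope.mp hder
  have hpos : ∀ᶠ y in nhdsWithin x₀ (Ioi x₀), 0 < deriv f y := by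
    have h1 : ∀ᶠ y in nhdsWithin x₀ (Ioi x₀), 0 < slope (deriv f) x₀ y := by
      have := hslope.mono_left (nhdsWithin_mono x₀ (by intro y hy; exact ne_of_gt hy))
      exact this.eventually (eventually_gt_nhds hm)
    filter_upwards [h1, self_mem_nhdsWithin] with y hy hy'
    have hxy : 0 < y - x₀ := sub_pos.mpr hy'
    rw [slope_def_field, h0, sub_zero, div_pos_iff] at hy
    rcases hy with ⟨h, _⟩ | ⟨_, h⟩
    · exact h
    · linarith
  obtain ⟨O, hO_sub, hO_open, hO_mem⟩ := eventually_nhds_iff.mp hdiff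
  have hmaxO : ∀ᶠ y in nhdsWithin x₀ (Ioi x₀), f y ≤ f x₀ :=
    (hmax.filter_mono nhdsWithin_le_nhds)
  obtain ⟨u, hu, hsub⟩ := mem_nhdsGT_iff_exists_Ioc_subset.mp (hpos.and hmaxO)
  obtain ⟨ε, hε, hball⟩ := Metric.isOpen_iff.mp hO_open x₀ hO_mem
  set u' := min u (x₀ + ε / 2) with hu'
  have hxu' : x₀ < u' := lt_min hu (by linarith)
  have hIccO : Icc x₀ u' ⊆ O := by
    intro y hy
    apply hball
    rw [Metric.mem_ball, Real.dist_eq, abs_lt]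
    have h2 : y ≤ x₀ + ε / 2 := le_trans hy.2 (min_le_right _ _)
    constructor <;> [linarith [hy.1]; linarith]
  have hmono : StrictMonoOn f (Icc x₀ u') := by
    apply strictMonoOn_of_deriv_pos (convex_Icc _ _)
    · intro y hy
      exact (hO_sub y (hIccO hy)).continuousAt.continuousWithinAt
    · intro y hy
      rw [interior_Icc] at hy
      exact (hsub ⟨hy.1, le_trans hy.2.le (min_le_left _ _)⟩).1
  have h1 : f x₀ < f u' := hmono (left_mem_Icc.mpr hxu'.le) (right_mem_Icc.mpr hxu'.le) hxu'
  have h2 : f u' ≤ f x₀ := (hsub ⟨hxu', min_le_left _ _⟩).2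
  linarith


set_option maxHeartbeats 1000000 in
/-- Proposition 4.3(a), radial form: upper bound `u₁(r) - u₂(r) ≤ (R/r)^p (u₁(R) - u₂(R))`
for two solutions of the radial equation with `u₂ ≥ 2(4-d)/r²`. -/
theorem stmt7 (d : ℕ) (hd : d = 1 ∨ d = 2 ∨ d = 3) (p : ℝ)
    (hp : (d = 1 ∧ p = 3) ∨ (d = 2 ∧ p = 2 * Real.sqrt 2) ∨
      (d = 3 ∧ p = (1 + Real.sqrt 17) / 2))
    (u₁ u₂ : ℝ → ℝ)
    (h₁nonneg : ∀ r > (1 : ℝ), 0 ≤ u₁ r) (h₂nonneg : ∀ r > (1 : ℝ), 0 ≤ u₂ r)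
    (h₁diff : ∀ r > (1 : ℝ), DifferentiableAt ℝ u₁ r)
    (h₁diff' : ∀ r > (1 : ℝ), DifferentiableAt ℝ (deriv u₁) r)
    (h₂diff : ∀ r > (1 : ℝ), DifferentiableAt ℝ u₂ r)
    (h₂diff' : ∀ r > (1 : ℝ), DifferentiableAt ℝ (deriv u₂) r)
    (h₁eq : ∀ r > (1 : ℝ),
      deriv (deriv u₁) r + ((d : ℝ) - 1) / r * deriv u₁ r = (u₁ r) ^ 2)
    (h₂eq : ∀ r > (1 : ℝ),
      deriv (deriv u₂) r + ((d : ℝ) - 1) / r * deriv u₂ r = (u₂ r) ^ 2)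
    (hle : ∀ r > (1 : ℝ), u₂ r ≤ u₁ r)
    (hlb : ∀ r > (1 : ℝ), 2 * (4 - (d : ℝ)) / r ^ 2 ≤ u₂ r)
    (hlim : Tendsto u₁ atTop (nhds 0)) :
    ∀ R r : ℝ, 1 < R → R ≤ r →
      u₁ r - u₂ r ≤ (R / r) ^ p * (u₁ R - u₂ R) := by
  -- basic facts about p
  have hpfacts : 0 < p ∧ p ^ 2 - ((d : ℝ) - 2) * p = 4 * (4 - (d : ℝ)) ∧ (d : ℝ) ≤ 3 := by
    have h2 : Real.sqrt 2 ^ 2 = 2 := Real.sq_sqrt (by norm_num)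
    have h17 : Real.sqrt 17 ^ 2 = 17 := Real.sq_sqrt (by norm_num)
    have h2p : 0 < Real.sqrt 2 := Real.sqrt_pos.mpr (by norm_num)
    have h17p : 0 < Real.sqrt 17 := Real.sqrt_pos.mpr (by norm_num)
    rcases hp with ⟨hd1, hp1⟩ | ⟨hd2, hp2⟩ | ⟨hd3, hp3⟩ <;> subst_vars <;>
      refine ⟨by nlinarith, by push_cast; nlinarith, by norm_num⟩
  obtain ⟨hppos, hkey, hd3⟩ := hpfacts
  have hd4 : (0:ℝ) < 4 - (d:ℝ) := by linarith
  intro R r hR hRr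
  have hR0 : (0:ℝ) < R := by linarith
  have hr1 : 1 < r := lt_of_lt_of_le hR hRr
  have hr0 : (0:ℝ) < r := by linarith
  set C : ℝ := (u₁ R - u₂ R) * R ^ p with hCdef
  have hC : 0 ≤ C := mul_nonneg (by linarith [hle R hR]) (Real.rpow_nonneg hR0.le p)
  set w : ℝ → ℝ := fun x => u₁ x - u₂ x - C * x ^ (-p) with hwdef
  -- reduce goal
  suffices hmain : ∀ x : ℝ, R ≤ x → w x ≤ 0 by
    have h := hmain r hRr
    have hrw : (R / r) ^ p * (u₁ R - u₂ R) = C * r ^ (-p) := by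
      rw [Real.div_rpow hR0.le hr0.le, Real.rpow_neg hr0.le, hCdef]
      ring
    rw [hrw]
    have : w r = u₁ r - u₂ r - C * r ^ (-p) := rfl
    linarith [h]
  -- key facts about w
  have hwdiff : ∀ x : ℝ, 1 < x → DifferentiableAt ℝ w x := by
    intro x hx
    have hx0 : x ≠ 0 := by positivity
    have hφ : DifferentiableAt ℝ (fun y : ℝ => y ^ (-p)) x :=
      (Real.hasDerivAt_rpow_const (Or.inl hx0)).differentiableAt
    exact ((h₁diff x hx).sub (h₂diff x hx)).sub (hφ.const_mul C)
  have hwR : w R = 0 := by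
    have h1 : R ^ p * R ^ (-p) = 1 := by
      rw [← Real.rpow_add hR0]; simp
    show u₁ R - u₂ R - C * R ^ (-p) = 0
    rw [hCdef, mul_assoc, h1]
    ring
  have hw0 : Tendsto w atTop (nhds 0) := by
    have hu₂ : Tendsto u₂ atTop (nhds 0) := by
      apply tendsto_of_tendsto_of_tendsto_of_le_of_le' tendsto_const_nhds hlim
      · filter_upwards [eventually_gt_atTop (1:ℝ)] with x hx using h₂nonneg x hx
      · filter_upwards [eventually_gt_atTop (1:ℝ)] with x hx using hle x hx
    have hφ : Tendsto (fun x : ℝ => C * x ^ (-p)) atTop (nhds 0) := by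
      have := (tendsto_rpow_neg_atTop hppos).const_mul C
      simpa using this
    have := (hlim.sub hu₂).sub hφ
    simpa using this
  -- main claim by contradiction
  by_contra hcon
  push_neg at hcon
  obtain ⟨r₀, hr₀R, hwr₀⟩ := hcon
  have hr₀1 : 1 < r₀ := lt_of_lt_of_le hR hr₀R
  -- find M beyond which w < w r₀
  have hev : ∀ᶠ x in atTop, w x < w r₀ := hw0.eventually (eventually_lt_nhds hwr₀)
  obtain ⟨M₀, hM₀⟩ := eventually_atTop.mp hev
  set M : ℝ := max M₀ (r₀ + 1) with hMdef
  have hr₀M : r₀ < M := lt_of_lt_of_le (by linarith) (le_max_right _ _)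
  have hRM : R ≤ M := le_trans hr₀R hr₀M.le
  have hwM : w M < w r₀ := hM₀ M (le_max_left _ _)
  -- maximum on [R, M]
  have hcont : ContinuousOn w (Icc R M) := by
    intro x hx
    exact (hwdiff x (lt_of_lt_of_le hR hx.1)).continuousAt.continuousWithinAt
  obtain ⟨c, hcmem, hcmax⟩ := isCompact_Icc.exists_isMaxOn ⟨R, left_mem_Icc.mpr hRM⟩ hcont
  have hwc : w r₀ ≤ w c := hcmax ⟨hr₀R, hr₀M.le⟩
  have hwc_pos : 0 < w c := lt_of_lt_of_le hwr₀ hwc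
  have hcR : R < c := by
    rcases lt_or_eq_of_le hcmem.1 with h | h
    · exact h
    · exfalso; rw [h] at hwR; linarith
  have hcM : c < M := by
    rcases lt_or_eq_of_le hcmem.2 with h | h
    · exact h
    · exfalso; rw [h] at hwc; linarith
  have hc1 : 1 < c := lt_trans hR hcR
  have hc0 : (0:ℝ) < c := by linarith
  have hc0' : c ≠ 0 := hc0.ne'
  have hlocmax : IsLocalMax w c := hcmax.isLocalMax (Icc_mem_nhds hcR hcM)
  -- derivative formula for w on (1, ∞)
  have hw' : ∀ x : ℝ, 1 < x →
      HasDerivAt w (deriv u₁ x - deriv u₂ x - C * (-p * x ^ (-p - 1))) x := by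
    intro x hx
    have hx0 : x ≠ 0 := by positivity
    exact ((h₁diff x hx).hasDerivAt.sub (h₂diff x hx).hasDerivAt).sub
      ((Real.hasDerivAt_rpow_const (Or.inl hx0)).const_mul C)
  have hderivw : ∀ x : ℝ, 1 < x →
      deriv w x = deriv u₁ x - deriv u₂ x + C * p * x ^ (-p - 1) := by
    intro x hx
    rw [(hw' x hx).deriv]; ring
  -- second derivative of w at c
  set m : ℝ := deriv (deriv u₁) c - deriv (deriv u₂) c
      + C * p * ((-p - 1) * c ^ (-p - 2)) with hmdef
  have hg' : HasDerivAt (fun x : ℝ => deriv u₁ x - deriv u₂ x + C * p * x ^ (-p - 1)) m c := by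
    have hφ : HasDerivAt (fun y : ℝ => y ^ (-p - 1)) ((-p - 1) * c ^ (-p - 2)) c := by
      have h := Real.hasDerivAt_rpow_const (p := -p - 1) (x := c) (Or.inl hc0')
      have he : (-p - 1 - 1 : ℝ) = -p - 2 := by ring
      rw [he] at h
      exact h
    exact ((h₁diff' c hc1).hasDerivAt.sub (h₂diff' c hc1).hasDerivAt).add (hφ.const_mul (C * p))
  have hw'' : HasDerivAt (deriv w) m c := by
    apply hg'.congr_of_eventuallyEq
    filter_upwards [Ioi_mem_nhds hc1] with x hx
    exact hderivw x hx
  -- derivative of w vanishes at c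
  have hz : deriv w c = 0 := hlocmax.deriv_eq_zero
  have hq : deriv u₁ c - deriv u₂ c = -(C * p * c ^ (-p - 1)) := by
    have := hderivw c hc1
    rw [hz] at this; linarith
  -- positivity of m
  have hm : 0 < m := by
    set A : ℝ := c ^ (-p) with hAdef
    have hApos : 0 < A := Real.rpow_pos_of_pos hc0 _
    have hA1 : c ^ (-p - 1) = A / c := by
      rw [hAdef, Real.rpow_sub hc0, Real.rpow_one]
    have hA2 : c ^ (-p - 2) = A / c ^ 2 := by
      rw [hAdef, show (-p - 2 : ℝ) = -p - (2:ℕ) by norm_num, Real.rpow_sub hc0,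
        Real.rpow_natCast]
    have e1 : deriv (deriv u₁) c = (u₁ c) ^ 2 - ((d:ℝ) - 1) / c * deriv u₁ c := by
      linarith [h₁eq c hc1]
    have e2 : deriv (deriv u₂) c = (u₂ c) ^ 2 - ((d:ℝ) - 1) / c * deriv u₂ c := by
      linarith [h₂eq c hc1]
    have hq' : deriv u₁ c - deriv u₂ c = -(C * p * (A / c)) := by rw [← hA1]; exact hq
    have hm2 : m * c ^ 2 = ((u₁ c) ^ 2 - (u₂ c) ^ 2) * c ^ 2 - 4 * (4 - (d:ℝ)) * (C * A) := by
      rw [hmdef, e1, e2, hA2]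
      exact alg _ p c A C _ _ _ _ hc0' hq' hkey
    have hwc_eq : w c = u₁ c - u₂ c - C * A := rfl
    have hlb' : 4 * (4 - (d:ℝ)) ≤ (u₁ c + u₂ c) * c ^ 2 := by
      have h1 := hlb c hc1
      have h2 := hle c hc1
      have hc2 : (0:ℝ) < c ^ 2 := by positivity
      rw [div_le_iff₀ hc2] at h1
      have h3 : u₂ c * c ^ 2 ≤ u₁ c * c ^ 2 := mul_le_mul_of_nonneg_right h2 (sq_nonneg c)
      have h4 : (u₁ c + u₂ c) * c ^ 2 = u₁ c * c ^ 2 + u₂ c * c ^ 2 := by ring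
      linarith
    have hfinal : 0 < m * c ^ 2 := by
      rw [hm2]
      have hwD : u₁ c - u₂ c = w c + C * A := by rw [hwc_eq]; ring
      have hDpos : 0 ≤ u₁ c - u₂ c := by linarith [hle c hc1]
      have hCA : 0 ≤ C * A := mul_nonneg hC hApos.le
      have step1 : 4 * (4 - (d:ℝ)) * (u₁ c - u₂ c) ≤
          (u₁ c + u₂ c) * c ^ 2 * (u₁ c - u₂ c) :=
        mul_le_mul_of_nonneg_right hlb' hDpos
      have step2 : 4 * (4 - (d:ℝ)) * (C * A) < 4 * (4 - (d:ℝ)) * (u₁ c - u₂ c) := by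
        apply mul_lt_mul_of_pos_left _ (by linarith : (0:ℝ) < 4 * (4 - (d:ℝ)))
        linarith [hwD, hwc_pos]
      have hring : (u₁ c + u₂ c) * c ^ 2 * (u₁ c - u₂ c) =
          ((u₁ c) ^ 2 - (u₂ c) ^ 2) * c ^ 2 := by ring
      linarith [step1, step2, hring.le, hring.ge]
    have hc2 : (0:ℝ) < c ^ 2 := by positivity
    rcases mul_pos_iff.mp hfinal with ⟨h, _⟩ | ⟨_, h⟩
    · exact h
    · linarith
  -- contradiction via second derivative test
  exact second_deriv_test
    (by filter_upwards [Ioi_mem_nhds hc1] with x hx using hwdiff x hx)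
    hlocmax hw'' hm
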